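/- For all real numbers a > 0, b > 0 and every real γ, the integral ∫₀¹ e^{γx} · x^{a-1} · (1-x)^{b-1} dx equals B(a,b) · (1 + Σ_{m=1}^∞ (a)_m γ^m / ((a+b)_m · m!)), where B(a,b) = Γ(a)Γ(b)/Γ(a+b) is the Beta function. In particular the integral is finite and the series on the right converges. -/

import Mathlib

open scoped BigOperators

/-- The real Pochhammer symbol `(a)_m = a (a+1) ⋯ (a+m-1)`. -/
noncomputable def pochR (a : ℝ) (m : ℕ) : ℝ := (ascPochhammer ℝ m).eval a

/-- The real Beta function `B(a,b) = Γ(a)Γ(b)/Γ(a+b)`. -/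
noncomputable def betaR (a b : ℝ) : ℝ := Real.Gamma a * Real.Gamma b / Real.Gamma (a + b)

open MeasureTheory Real Set

lemma pochR_zero (a : ℝ) : pochR a 0 = 1 := by simp [pochR]

lemma pochR_succ (a : ℝ) (m : ℕ) : pochR a (m + 1) = pochR a m * (a + m) := by
  simp [pochR, ascPochhammer_succ_right]

lemma pochR_pos {a : ℝ} (ha : 0 < a) (m : ℕ) : 0 < pochR a m := by
  induction m with
  | zero => simp [pochR_zero]
  | succ n ih => rw [pochR_succ]; positivity

lemma Gamma_pochR {a : ℝ} (ha : 0 < a) (m : ℕ) :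
    Real.Gamma (a + m) = Real.Gamma a * pochR a m := by
  induction m with
  | zero => simp [pochR_zero]
  | succ n ih =>
      have h : a + (n + 1 : ℕ) = (a + n) + 1 := by push_cast; ring
      rw [h, Real.Gamma_add_one (by positivity), ih, pochR_succ]; ring

lemma pochR_le {a b : ℝ} (ha : 0 < a) (hb : 0 < b) (m : ℕ) :
    pochR a m ≤ pochR (a + b) m := by
  induction m with
  | zero => simp [pochR_zero]
  | succ n ih =>
      rw [pochR_succ, pochR_succ]
      have h1 : (0:ℝ) < a + n := by positivity
      have := pochR_pos ha n
      nlinarith [pochR_pos (by positivity : (0:ℝ) < a + b) n]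

lemma beta_fun_eq (a b : ℝ) {x : ℝ} (hx : x ∈ Set.Icc (0:ℝ) 1) :
    ((x : ℂ) ^ ((a:ℂ) - 1) * (1 - (x:ℂ)) ^ ((b:ℂ) - 1)) =
      ((x ^ (a - 1) * (1 - x) ^ (b - 1) : ℝ) : ℂ) := by
  obtain ⟨h0, h1⟩ := hx
  push_cast
  rw [Complex.ofReal_cpow h0, Complex.ofReal_cpow (by linarith)]
  push_cast
  ring

lemma betaIntegrableOn {a b : ℝ} (ha : 0 < a) (hb : 0 < b) :
    IntegrableOn (fun x : ℝ => x ^ (a - 1) * (1 - x) ^ (b - 1)) (Set.Ioo 0 1) := by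
  have hC := Complex.betaIntegral_convergent (u := a) (v := b) (by simpa) (by simpa)
  rw [intervalIntegrable_iff_integrableOn_Ioc_of_le zero_le_one] at hC
  have hC' : IntegrableOn
      (fun x : ℝ => ((x ^ (a - 1) * (1 - x) ^ (b - 1) : ℝ) : ℂ)) (Set.Ioc 0 1) := by
    refine hC.congr_fun (fun x hx => ?_) measurableSet_Ioc
    exact beta_fun_eq a b ⟨hx.1.le, hx.2⟩
  have h2 : IntegrableOn (fun x : ℝ => x ^ (a - 1) * (1 - x) ^ (b - 1)) (Set.Ioc 0 1) := by
    simpa [IntegrableOn] using hC'.re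
  exact h2.mono_set Set.Ioo_subset_Ioc_self

lemma betaIntegral_Ioo {a b : ℝ} (ha : 0 < a) (hb : 0 < b) :
    ∫ x in Set.Ioo (0:ℝ) 1, x ^ (a - 1) * (1 - x) ^ (b - 1) = betaR a b := by
  have key : Complex.betaIntegral a b =
      ((∫ x in Set.Ioo (0:ℝ) 1, x ^ (a - 1) * (1 - x) ^ (b - 1) : ℝ) : ℂ) := by
    rw [Complex.betaIntegral]
    have step1 : (∫ x in (0:ℝ)..1, (x:ℂ) ^ ((a:ℂ) - 1) * (1 - (x:ℂ)) ^ ((b:ℂ) - 1)) =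
        ∫ x in (0:ℝ)..1, ((x ^ (a - 1) * (1 - x) ^ (b - 1) : ℝ) : ℂ) := by
      refine intervalIntegral.integral_congr (fun x hx => ?_)
      rw [Set.uIcc_of_le zero_le_one] at hx
      exact beta_fun_eq a b hx
    rw [step1, intervalIntegral.integral_ofReal, intervalIntegral.integral_of_le zero_le_one,
      MeasureTheory.integral_Ioc_eq_integral_Ioo]
  have hG := Complex.Gamma_mul_Gamma_eq_betaIntegral (s := a) (t := b) (by simpa) (by simpa)
  rw [key] at hG
  simp only [← Complex.ofReal_add, Complex.Gamma_ofReal] at hG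
  have h2 : Real.Gamma a * Real.Gamma b =
      Real.Gamma (a + b) * ∫ x in Set.Ioo (0:ℝ) 1, x ^ (a - 1) * (1 - x) ^ (b - 1) := by
    exact_mod_cast hG
  have hg : Real.Gamma (a + b) ≠ 0 := (Real.Gamma_pos_of_pos (by linarith)).ne'
  rw [betaR, h2]
  field_simp

lemma betaR_pos {a b : ℝ} (ha : 0 < a) (hb : 0 < b) : 0 < betaR a b :=
  div_pos (mul_pos (Real.Gamma_pos_of_pos ha) (Real.Gamma_pos_of_pos hb))
    (Real.Gamma_pos_of_pos (by linarith))

lemma betaR_add_nat {a b : ℝ} (ha : 0 < a) (hb : 0 < b) (m : ℕ) :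
    betaR (a + m) b = betaR a b * (pochR a m / pochR (a + b) m) := by
  have h1 : Real.Gamma (a + m) = Real.Gamma a * pochR a m := Gamma_pochR ha m
  have h2 : Real.Gamma (a + m + b) = Real.Gamma (a + b) * pochR (a + b) m := by
    rw [show a + (m:ℝ) + b = (a + b) + m by ring]
    exact Gamma_pochR (by linarith) m
  have hg : Real.Gamma (a + b) ≠ 0 := (Real.Gamma_pos_of_pos (by linarith)).ne'
  have hp : pochR (a + b) m ≠ 0 := (pochR_pos (by linarith) m).ne'
  rw [betaR, betaR, h1, h2]
  field_simp


/-- For `a, b > 0` and any real `γ`,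
`∫₀¹ e^{γx} x^{a-1} (1-x)^{b-1} dx = B(a,b) (1 + Σ_{m≥1} (a)_m γ^m /((a+b)_m m!))`;
in particular the integral is finite and the series converges. -/
theorem integral_exp_mul_beta_kernel (a b γ : ℝ) (ha : 0 < a) (hb : 0 < b) :
    MeasureTheory.IntegrableOn
      (fun x : ℝ => Real.exp (γ * x) * x ^ (a - 1) * (1 - x) ^ (b - 1))
      (Set.Ioo 0 1) ∧
    Summable (fun m : ℕ =>
      pochR a (m + 1) * γ ^ (m + 1) /
        (pochR (a + b) (m + 1) * (Nat.factorial (m + 1)))) ∧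
    ∫ x in Set.Ioo (0 : ℝ) 1,
        Real.exp (γ * x) * x ^ (a - 1) * (1 - x) ^ (b - 1) =
      betaR a b *
        (1 + ∑' m : ℕ,
          pochR a (m + 1) * γ ^ (m + 1) /
            (pochR (a + b) (m + 1) * (Nat.factorial (m + 1)))) := by
  set S : ℕ → ℝ := fun m => pochR a m * γ ^ m / (pochR (a + b) m * (Nat.factorial m : ℝ))
    with hSdef
  -- basic facts
  have hab : (0:ℝ) < a + b := by linarith
  have hratio_nonneg : ∀ m : ℕ, 0 ≤ pochR a m / pochR (a + b) m := fun m =>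
    le_of_lt (div_pos (pochR_pos ha m) (pochR_pos hab m))
  have hratio_le : ∀ m : ℕ, pochR a m / pochR (a + b) m ≤ 1 := fun m =>
    (div_le_one (pochR_pos hab m)).mpr (pochR_le ha hb m)
  -- summability of S
  have hS : Summable S := by
    apply Summable.of_abs
    refine Summable.of_nonneg_of_le (fun m => abs_nonneg _)
      (fun m => ?_) (Real.summable_pow_div_factorial |γ|)
    have h1 : |S m| = (pochR a m / pochR (a + b) m) * (|γ| ^ m / (Nat.factorial m : ℝ)) := by
      rw [hSdef]
      rw [abs_div, abs_mul, abs_mul, abs_pow,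
        abs_of_pos (pochR_pos ha m), abs_of_pos (pochR_pos hab m),
        Nat.abs_cast]
      field_simp
    rw [h1]
    calc (pochR a m / pochR (a + b) m) * (|γ| ^ m / (Nat.factorial m : ℝ))
        ≤ 1 * (|γ| ^ m / (Nat.factorial m : ℝ)) := by
          apply mul_le_mul_of_nonneg_right (hratio_le m); positivity
      _ = |γ| ^ m / (Nat.factorial m : ℝ) := one_mul _
  have hSshift : Summable (fun m : ℕ => S (m + 1)) := (summable_nat_add_iff 1).mpr hS
  -- integrability of the target function
  have hg_int := betaIntegrableOn ha hb
  have hmeas : AEStronglyMeasurable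
      (fun x : ℝ => Real.exp (γ * x) * x ^ (a - 1) * (1 - x) ^ (b - 1))
      (MeasureTheory.volume.restrict (Set.Ioo 0 1)) := by
    refine ContinuousOn.aestronglyMeasurable ?_ measurableSet_Ioo
    refine ContinuousOn.mul (ContinuousOn.mul ?_ ?_) ?_
    · exact (Real.continuous_exp.comp (continuous_const.mul continuous_id)).continuousOn
    · exact continuousOn_id.rpow_const (fun x hx => Or.inl hx.1.ne')
    · exact (continuousOn_const.sub continuousOn_id).rpow_const
        (fun x hx => Or.inl (sub_ne_zero.mpr (ne_of_lt hx.2).symm))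
  have hTargetInt : MeasureTheory.IntegrableOn
      (fun x : ℝ => Real.exp (γ * x) * x ^ (a - 1) * (1 - x) ^ (b - 1)) (Set.Ioo 0 1) := by
    refine MeasureTheory.Integrable.mono (hg_int.const_mul (Real.exp |γ|)) hmeas ?_
    rw [MeasureTheory.ae_restrict_iff' measurableSet_Ioo]
    refine MeasureTheory.ae_of_all _ (fun x hx => ?_)
    have hx0 : (0:ℝ) < x := hx.1
    have hx1 : x < 1 := hx.2
    have h1 : (0:ℝ) ≤ x ^ (a - 1) := Real.rpow_nonneg hx0.le _
    have h2 : (0:ℝ) ≤ (1 - x) ^ (b - 1) := Real.rpow_nonneg (by linarith) _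
    have hexp : Real.exp (γ * x) ≤ Real.exp |γ| := by
      apply Real.exp_le_exp.mpr
      calc γ * x ≤ |γ * x| := le_abs_self _
        _ = |γ| * |x| := abs_mul _ _
        _ ≤ |γ| * 1 := by
            apply mul_le_mul_of_nonneg_left _ (abs_nonneg γ)
            rw [abs_of_pos hx0]; linarith
        _ = |γ| := mul_one _
    have hnn : (0:ℝ) ≤ x ^ (a - 1) * (1 - x) ^ (b - 1) := mul_nonneg h1 h2
    rw [Real.norm_eq_abs, Real.norm_eq_abs, abs_mul, abs_mul, abs_of_nonneg h1,
      abs_of_nonneg h2, abs_of_pos (Real.exp_pos _), abs_mul,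
      abs_of_pos (Real.exp_pos _), abs_of_nonneg hnn]
    nlinarith [mul_nonneg (sub_nonneg.mpr hexp) hnn]
  refine ⟨hTargetInt, hSshift, ?_⟩
  -- term functions
  set F : ℕ → ℝ → ℝ := fun m x =>
    γ ^ m / (Nat.factorial m : ℝ) * (x ^ (a + m - 1) * (1 - x) ^ (b - 1)) with hFdef
  have hIntF : ∀ m : ℕ, MeasureTheory.IntegrableOn (F m) (Set.Ioo 0 1) := fun m =>
    (betaIntegrableOn (a := a + m) (by positivity) hb).const_mul _
  have hIF : ∀ m : ℕ, (∫ x in Set.Ioo (0:ℝ) 1, F m x)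
      = γ ^ m / (Nat.factorial m : ℝ) * betaR (a + m) b := by
    intro m
    rw [hFdef]
    simp only
    rw [MeasureTheory.integral_const_mul, betaIntegral_Ioo (by positivity) hb]
  have hnormF : ∀ m : ℕ, (∫ x in Set.Ioo (0:ℝ) 1, ‖F m x‖)
      = |γ| ^ m / (Nat.factorial m : ℝ) * betaR (a + m) b := by
    intro m
    have step : ∀ x ∈ Set.Ioo (0:ℝ) 1, ‖F m x‖
        = |γ| ^ m / (Nat.factorial m : ℝ) * (x ^ (a + m - 1) * (1 - x) ^ (b - 1)) := by
      intro x hx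
      have h1 : (0:ℝ) ≤ x ^ (a + m - 1) := Real.rpow_nonneg hx.1.le _
      have h2 : (0:ℝ) ≤ (1 - x) ^ (b - 1) := Real.rpow_nonneg (by linarith [hx.2]) _
      rw [hFdef]
      simp only
      rw [Real.norm_eq_abs, abs_mul, abs_div, abs_pow, Nat.abs_cast,
        abs_mul, abs_of_nonneg h1, abs_of_nonneg h2]
    rw [MeasureTheory.setIntegral_congr_fun measurableSet_Ioo step,
      MeasureTheory.integral_const_mul, betaIntegral_Ioo (by positivity) hb]
  have hSumNorm : Summable (fun m : ℕ => ∫ x in Set.Ioo (0:ℝ) 1, ‖F m x‖) := by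
    simp only [hnormF]
    refine Summable.of_nonneg_of_le (fun m => ?_) (fun m => ?_)
      ((Real.summable_pow_div_factorial |γ|).mul_right (betaR a b))
    · have := betaR_pos (show (0:ℝ) < a + m by positivity) hb
      positivity
    · rw [betaR_add_nat ha hb m]
      have hB := betaR_pos ha hb
      calc |γ| ^ m / (Nat.factorial m : ℝ) * (betaR a b * (pochR a m / pochR (a + b) m))
          ≤ |γ| ^ m / (Nat.factorial m : ℝ) * (betaR a b * 1) := by
            apply mul_le_mul_of_nonneg_left _ (by positivity)
            exact mul_le_mul_of_nonneg_left (hratio_le m) hB.le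
        _ = |γ| ^ m / (Nat.factorial m : ℝ) * betaR a b := by ring
  -- pointwise series identity
  have hpt : ∀ x ∈ Set.Ioo (0:ℝ) 1,
      Real.exp (γ * x) * x ^ (a - 1) * (1 - x) ^ (b - 1) = ∑' m : ℕ, F m x := by
    intro x hx
    have hx0 : (0:ℝ) < x := hx.1
    have hterm : ∀ m : ℕ, F m x
        = (γ * x) ^ m / (Nat.factorial m : ℝ) * (x ^ (a - 1) * (1 - x) ^ (b - 1)) := by
      intro m
      have hxp : x ^ (a + (m:ℝ) - 1) = x ^ (m:ℕ) * x ^ (a - 1) := by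
        rw [← Real.rpow_natCast x m, ← Real.rpow_add hx0]
        ring_nf
      rw [hFdef]
      simp only
      rw [hxp, mul_pow]
      ring
    rw [tsum_congr hterm, tsum_mul_right]
    have hexp : Real.exp (γ * x) = ∑' n : ℕ, (γ * x) ^ n / (Nat.factorial n : ℝ) := by
      rw [Real.exp_eq_exp_ℝ, NormedSpace.exp_eq_tsum_div]
    rw [← hexp]
    ring
  -- put it together
  have hmain : (∫ x in Set.Ioo (0:ℝ) 1,
      Real.exp (γ * x) * x ^ (a - 1) * (1 - x) ^ (b - 1))
      = ∑' m : ℕ, ∫ x in Set.Ioo (0:ℝ) 1, F m x := by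
    rw [MeasureTheory.setIntegral_congr_fun measurableSet_Ioo hpt]
    exact (MeasureTheory.integral_tsum_of_summable_integral_norm hIntF hSumNorm).symm
  rw [hmain]
  have hterm2 : ∀ m : ℕ, (∫ x in Set.Ioo (0:ℝ) 1, F m x) = betaR a b * S m := by
    intro m
    rw [hIF m, betaR_add_nat ha hb m, hSdef]
    have hp : pochR (a + b) m ≠ 0 := (pochR_pos hab m).ne'
    have hf : (Nat.factorial m : ℝ) ≠ 0 := Nat.cast_ne_zero.mpr (Nat.factorial_ne_zero m)
    field_simp
  rw [tsum_congr hterm2, tsum_mul_left, Summable.tsum_eq_zero_add hS]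
  have hS0 : S 0 = 1 := by simp [hSdef, pochR_zero]
  rw [hS0]
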